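/- For $\alpha>0$, $|w|<1$, and $t\in[-1,1]$, the Gegenbauer generating-function identity holds: $\sum_{k=0}^{\infty} C_k^{(\alpha)}(t) w^k = \frac{1}{(1-2tw+w^2)^{\alpha}}$. -/

import Mathlib

noncomputable def gegenbauer (α : ℝ) : ℕ → ℝ → ℝ
  | 0, _ => 1
  | 1, t => 2 * α * t
  | (k + 2), t =>
      (2 * t * ((k : ℝ) + 2 + α - 1) * gegenbauer α (k + 1) t -
        ((k : ℝ) + 2 + 2 * α - 2) * gegenbauer α k t) / ((k : ℝ) + 2)

open Finset Complex


noncomputable def gbin (α : ℝ) : ℕ → ℝ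
  | 0 => 1
  | (k+1) => gbin α k * (α + k) / (k + 1)

lemma gbin_pos {α : ℝ} (hα : 0 < α) : ∀ k, 0 < gbin α k
  | 0 => one_pos
  | (k+1) => by
    rw [gbin]
    have := gbin_pos hα k
    positivity

lemma gbin_succ (α : ℝ) (k : ℕ) : ((k:ℝ)+1) * gbin α (k+1) = (α + k) * gbin α k := by
  rw [gbin]
  field_simp

noncomputable def cz (α : ℝ) (m : ℤ) : ℝ := if 0 ≤ m then gbin α m.toNat else 0

lemma cz_natCast (α : ℝ) (n : ℕ) : cz α n = gbin α n := by simp [cz]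

lemma cz_neg (α : ℝ) {m : ℤ} (h : m < 0) : cz α m = 0 := by simp [cz, not_le.mpr h]

lemma cz_key (α : ℝ) (m : ℤ) : ((m:ℝ)+1) * cz α (m+1) = (α + m) * cz α m := by
  rcases lt_trichotomy m (-1) with h | h | h
  · rw [cz_neg α (by omega), cz_neg α (by omega), mul_zero, mul_zero]
  · subst h; simp [cz]
  · have h0 : 0 ≤ m := by omega
    lift m to ℕ using h0
    rw [cz_natCast]
    have : ((m:ℤ)+1) = ((m+1:ℕ):ℤ) := by push_cast; ring
    rw [this, cz_natCast]
    push_cast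
    exact gbin_succ α m

lemma cz_id (α : ℝ) (N m : ℤ) :
    (N:ℝ) * (cz α m * cz α (N-m)) =
      ((N:ℝ)-1+α) * (cz α (m-1) * cz α (N-m) + cz α m * cz α (N-1-m)) -
        ((N:ℝ)-2+2*α) * (cz α (m-1) * cz α (N-1-m)) := by
  have k1 := cz_key α (m-1)
  have k2 := cz_key α (N-1-m)
  rw [show m - 1 + 1 = m by ring] at k1
  rw [show N - 1 - m + 1 = N - m by ring] at k2
  push_cast at k1 k2 ⊢
  linear_combination (cz α (N-m) - cz α (N-1-m)) * k1 + (cz α m - cz α (m-1)) * k2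

lemma gbin_mul_factorial (α : ℝ) : ∀ n : ℕ, gbin α n * (n.factorial : ℝ) = ∏ i ∈ range n, (α + i)
  | 0 => by simp [gbin]
  | (n+1) => by
    rw [prod_range_succ, ← gbin_mul_factorial α n, Nat.factorial_succ]
    have h := gbin_succ α n
    push_cast
    nlinarith [h]

lemma sum_Icc_erase_bot {f : ℤ → ℂ} {N : ℤ} (h : f 0 = 0) (hN : 0 ≤ N) :
    ∑ m ∈ Finset.Icc (0:ℤ) N, f m = ∑ m ∈ Finset.Icc (1:ℤ) N, f m := by
  rw [← Finset.sum_erase (Finset.Icc (0:ℤ) N) h, Finset.Icc_erase_left]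
  congr 1
  ext m; simp [Finset.mem_Ioc, Finset.mem_Icc]; omega

lemma sum_Icc_erase_top {f : ℤ → ℂ} {N : ℤ} (h : f N = 0) (hN : 0 ≤ N) :
    ∑ m ∈ Finset.Icc (0:ℤ) N, f m = ∑ m ∈ Finset.Icc (0:ℤ) (N-1), f m := by
  rw [← Finset.sum_erase (Finset.Icc (0:ℤ) N) h, Finset.Icc_erase_right]
  congr 1
  ext m; simp [Finset.mem_Ico, Finset.mem_Icc]

lemma sum_Icc_shift (f : ℤ → ℂ) (M : ℤ) :
    ∑ m ∈ Finset.Icc (1:ℤ) (M+1), f m = ∑ m ∈ Finset.Icc (0:ℤ) M, f (m+1) := by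
  have h : Finset.Icc (1:ℤ) (M+1) = Finset.map (addRightEmbedding 1) (Finset.Icc 0 M) := by
    rw [Finset.map_add_right_Icc]; norm_num
  rw [h, Finset.sum_map]
  rfl

lemma cz_neg_one (α : ℝ) : cz α (-1) = 0 := cz_neg α (by norm_num)

noncomputable def gg (α : ℝ) (z : ℂ) (N m : ℤ) : ℂ :=
  ((cz α m * cz α (N-m) : ℝ) : ℂ) * z ^ m * ((starRingEnd ℂ) z) ^ (N-m)

noncomputable def AA (α : ℝ) (z : ℂ) (n : ℕ) : ℂ :=
  ∑ m ∈ Finset.Icc (0:ℤ) (n:ℤ), gg α z (n:ℤ) m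

section
variable {α : ℝ} {z : ℂ} (hz : z * (starRingEnd ℂ) z = 1)

include hz

lemma z_ne : z ≠ 0 := by
  rintro rfl; simp at hz

lemma zb_ne : (starRingEnd ℂ) z ≠ 0 := by
  rintro h; rw [h, mul_zero] at hz; exact zero_ne_one hz

lemma AA_rec (n : ℕ) :
    ((n:ℂ)+2) * AA α z (n+2) =
      (z + (starRingEnd ℂ) z) * ((n:ℂ)+1+α) * AA α z (n+1) - ((n:ℂ)+2*α) * AA α z n := by
  have hzne := z_ne hz
  have hzbne := zb_ne hz
  set zb := (starRingEnd ℂ) z with hzb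
  set N : ℤ := (n:ℤ) + 2 with hN
  set P1 : ℤ → ℂ := fun m => ((cz α (m-1) * cz α (N-m) : ℝ) : ℂ) * z ^ m * zb ^ (N-m) with hP1
  set P2 : ℤ → ℂ := fun m => ((cz α m * cz α (N-1-m) : ℝ) : ℂ) * z ^ m * zb ^ (N-m) with hP2
  set P3 : ℤ → ℂ := fun m => ((cz α (m-1) * cz α (N-1-m) : ℝ) : ℂ) * z ^ m * zb ^ (N-m) with hP3
  have hNn : (0:ℤ) ≤ N := by omega
  have hc1 : ((n+1:ℕ):ℤ) = (n:ℤ)+1 := by omega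
  have hc2 : ((n+2:ℕ):ℤ) = N := by omega
  have e1 : ∑ m ∈ Finset.Icc (0:ℤ) N, P1 m = z * AA α z (n+1) := by
    rw [sum_Icc_erase_bot (by norm_num [hP1, cz_neg_one α]) hNn,
      show N = ((n:ℤ)+1)+1 by omega, sum_Icc_shift P1 ((n:ℤ)+1),
      AA, hc1, Finset.mul_sum]
    refine Finset.sum_congr rfl ?_
    intro m hm
    simp only [hP1]
    rw [show m + 1 - 1 = m by ring, show N - (m+1) = (n:ℤ) + 1 - m by omega,
      zpow_add₀ hzne m 1, zpow_one, gg]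
    push_cast
    ring
  have e2 : ∑ m ∈ Finset.Icc (0:ℤ) N, P2 m = zb * AA α z (n+1) := by
    rw [sum_Icc_erase_top (f := P2) (by norm_num [hP2, show N-1-N = -1 by omega, cz_neg_one α]) hNn,
      show N - 1 = (n:ℤ)+1 by omega, AA, hc1, Finset.mul_sum]
    refine Finset.sum_congr rfl ?_
    intro m hm
    simp only [Finset.mem_Icc] at hm
    simp only [hP2, gg]
    rw [show N - 1 - m = (n:ℤ) + 1 - m by omega, show N - m = ((n:ℤ)+1-m) + 1 by omega,
      zpow_add₀ hzbne _ 1, zpow_one]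
    push_cast
    ring
  have e3 : ∑ m ∈ Finset.Icc (0:ℤ) N, P3 m = AA α z n := by
    rw [sum_Icc_erase_bot (by norm_num [hP3, cz_neg_one α]) hNn,
      show N = ((n:ℤ)+1)+1 by omega, sum_Icc_shift P3 ((n:ℤ)+1)]
    have htop : P3 (((n:ℤ)+1)+1) = 0 := by
      simp only [hP3]
      rw [show N - 1 - ((n:ℤ)+1+1) = -1 by omega, cz_neg_one α]
      simp
    rw [sum_Icc_erase_top (f := fun m => P3 (m+1)) (by simpa using htop) (by omega),
      show (n:ℤ)+1-1 = (n:ℤ) by ring, AA]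
    refine Finset.sum_congr rfl ?_
    intro m hm
    simp only [Finset.mem_Icc] at hm
    simp only [hP3, gg]
    rw [show m + 1 - 1 = m by ring, show N - 1 - (m+1) = ((n:ℕ):ℤ) - m by omega,
      show N - (m+1) = (((n:ℕ):ℤ) - m) + 1 by omega,
      zpow_add₀ hzne m 1, zpow_one, zpow_add₀ hzbne _ 1, zpow_one]
    push_cast
    linear_combination ((cz α m : ℂ) * (cz α ((n:ℤ)-m)) * z ^ m * zb ^ ((n:ℤ)-m)) * hz
  have key : ∀ m ∈ Finset.Icc (0:ℤ) N, (N:ℂ) * gg α z N m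
      = ((N:ℂ)-1+α) * (P1 m + P2 m) - ((N:ℂ)-2+2*α) * P3 m := by
    intro m _
    have h0 := cz_id α N m
    simp only [gg, hP1, hP2, hP3]
    have hc : ((N:ℝ) * (cz α m * cz α (N-m)) : ℂ)
        = (((N:ℝ)-1+α) * (cz α (m-1) * cz α (N-m) + cz α m * cz α (N-1-m))
          - ((N:ℝ)-2+2*α) * (cz α (m-1) * cz α (N-1-m)) : ℝ) := by
      exact_mod_cast congrArg (fun x : ℝ => (x : ℂ)) h0
    push_cast at hc ⊢
    linear_combination (z ^ m * zb ^ (N-m)) * hc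
  have hsum : (N:ℂ) * AA α z (n+2) =
      ((N:ℂ)-1+α) * ((z + zb) * AA α z (n+1)) - ((N:ℂ)-2+2*α) * AA α z n := by
    have h1 : (N:ℂ) * AA α z (n+2) = ∑ m ∈ Finset.Icc (0:ℤ) N, (N:ℂ) * gg α z N m := by
      rw [AA, hc2, Finset.mul_sum]
    rw [h1, Finset.sum_congr rfl key, Finset.sum_sub_distrib, ← Finset.mul_sum,
      ← Finset.mul_sum, Finset.sum_add_distrib, e1, e2, e3]
    ring
  have hNc : ((N:ℤ):ℂ) = (n:ℂ) + 2 := by push_cast [hN]; ring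
  rw [hNc] at hsum
  linear_combination hsum
end


lemma gbin_zero (α : ℝ) : gbin α 0 = 1 := rfl

lemma gbin_one (α : ℝ) : gbin α 1 = α := by
  rw [gbin, gbin]
  norm_num

lemma gg_def (α : ℝ) (z : ℂ) (N m : ℤ) : gg α z N m =
    ((cz α m * cz α (N-m) : ℝ) : ℂ) * z ^ m * ((starRingEnd ℂ) z) ^ (N-m) := rfl

lemma AA_def (α : ℝ) (z : ℂ) (n : ℕ) :
    AA α z n = ∑ m ∈ Finset.Icc (0:ℤ) (n:ℤ), gg α z (n:ℤ) m := rfl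

lemma gbin_mul_factorial' (α : ℝ) (n : ℕ) : gbin α n * (n.factorial : ℝ) = ∏ i ∈ Finset.range n, (α + i) :=
  gbin_mul_factorial α n

lemma slit_of_re_lt_one {u : ℂ} (hu : u.re < 1) : (1 - u) ∈ Complex.slitPlane := by
  rw [Complex.mem_slitPlane_iff]
  left
  simp [Complex.sub_re]
  linarith

lemma iter_cpow (α : ℝ) (n : ℕ) :
    Set.EqOn (iteratedDeriv n (fun u : ℂ => (1-u)^(-(α:ℂ))))
      (fun u => (∏ i ∈ range n, ((α:ℂ)+i)) * (1-u)^(-(α:ℂ)-n)) {u : ℂ | u.re < 1} := by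
  induction n with
  | zero => intro u hu; simp [iteratedDeriv_zero]
  | succ n ih =>
    intro u hu
    have hopen : IsOpen {u : ℂ | u.re < 1} := isOpen_lt Complex.continuous_re continuous_const
    rw [iteratedDeriv_succ, (ih.eventuallyEq_of_mem (hopen.mem_nhds hu)).deriv_eq]
    have h1 : HasDerivAt (fun v : ℂ => 1 - v) (-1) u := by
      simpa using (hasDerivAt_id u).const_sub (1:ℂ)
    have h2 := (h1.cpow_const (c := -(α:ℂ)-n) (slit_of_re_lt_one hu)).const_mul
      (∏ i ∈ range n, ((α:ℂ)+i))
    rw [h2.deriv, prod_range_succ]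
    rw [show -(α:ℂ) - ((n:ℕ)+1:ℕ) = (-(α:ℂ)-n) - 1 by push_cast; ring]
    ring

lemma binom_hasSum (α : ℝ) {u : ℂ} (hu : ‖u‖ < 1) :
    HasSum (fun n => ((gbin α n : ℝ) : ℂ) * u ^ n) ((1 - u) ^ (-(α:ℂ))) := by
  have hdiff : DifferentiableOn ℂ (fun u : ℂ => (1-u)^(-(α:ℂ))) (Metric.ball 0 1) := by
    intro v hv
    have hre : v.re < 1 := by
      rw [Metric.mem_ball, dist_zero_right] at hv
      calc v.re ≤ |v.re| := le_abs_self _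
        _ ≤ ‖v‖ := Complex.abs_re_le_norm v
        _ < 1 := hv
    exact (((hasDerivAt_id v).const_sub (1:ℂ)).cpow_const
      (slit_of_re_lt_one hre)).differentiableAt.differentiableWithinAt
  have H := Complex.hasSum_taylorSeries_on_ball hdiff
    (show u ∈ Metric.ball (0:ℂ) 1 by rwa [Metric.mem_ball, dist_zero_right])
  convert H using 2 with n
  · rfl
  rw [iter_cpow α n (show (0:ℂ) ∈ {u : ℂ | u.re < 1} by norm_num)]
  have h1 : ((1:ℂ) - 0) ^ (-(α:ℂ)-n) = 1 := by rw [sub_zero, Complex.one_cpow]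
  have h2 : (gbin α n : ℂ) * (n.factorial : ℂ) = ∏ i ∈ range n, ((α:ℂ)+i) := by
    have := congrArg (fun x : ℝ => (x : ℂ)) (gbin_mul_factorial α n)
    push_cast at this
    exact this
  have hfac : ((n.factorial : ℂ)) ≠ 0 := by exact_mod_cast n.factorial_ne_zero
  simp only [smul_eq_mul, sub_zero, h1, mul_one]
  field_simp [← h2]
  rw [Complex.one_cpow, ← h2]
  ring

lemma sum_Icc_int (f : ℤ → ℂ) : ∀ n : ℕ, ∑ m ∈ Finset.Icc (0:ℤ) (n:ℤ), f m = ∑ j ∈ range (n+1), f j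
  | 0 => by simp
  | (n+1) => by
    have h1 : Finset.Icc (0:ℤ) ((n+1:ℕ):ℤ) = insert ((n:ℤ)+1) (Finset.Icc (0:ℤ) (n:ℤ)) := by
      ext m; simp only [Finset.mem_Icc, Finset.mem_insert]; omega
    rw [h1, Finset.sum_insert (by simp), Finset.sum_range_succ, sum_Icc_int f n]
    rw [show ((n:ℤ)+1) = ((n+1:ℕ):ℤ) by push_cast; ring]
    ring

lemma AA_eq_range (α : ℝ) (z : ℂ) (n : ℕ) :
    AA α z n = ∑ j ∈ range (n+1),
      ((gbin α j * gbin α (n-j) : ℝ) : ℂ) * z ^ j * ((starRingEnd ℂ) z) ^ (n-j) := by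
  rw [AA_def, sum_Icc_int]
  refine Finset.sum_congr rfl ?_
  intro j hj
  simp only [Finset.mem_range] at hj
  rw [gg_def, cz_natCast, show ((n:ℤ) - (j:ℕ) : ℤ) = ((n - j : ℕ) : ℤ) by omega,
    cz_natCast, zpow_natCast, zpow_natCast]

lemma gbin_summable {α : ℝ} (hα : 0 < α) {r : ℝ} (h0 : 0 < r) (hr : r < 1) :
    Summable (fun n => gbin α n * r ^ n) := by
  apply summable_of_ratio_test_tendsto_lt_one hr
  · filter_upwards with n
    have := gbin_pos hα n
    positivity
  · have hterm : ∀ n : ℕ, ‖gbin α (n+1) * r ^ (n+1)‖ / ‖gbin α n * r ^ n‖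
        = (1 + (α-1) * (1/((n:ℝ)+1))) * r := by
      intro n
      have h1 := gbin_pos hα n
      have h2 := gbin_pos hα (n+1)
      have h3 := gbin_succ α n
      rw [Real.norm_eq_abs, Real.norm_eq_abs, abs_of_pos (by positivity),
        abs_of_pos (by positivity), pow_succ]
      rw [div_eq_iff (by positivity)]
      have hn : ((n:ℝ)+1) ≠ 0 := by positivity
      field_simp
      linear_combination h3
    simp only [hterm]
    have h := tendsto_one_div_add_atTop_nhds_zero_nat (𝕜 := ℝ)
    have h2 := ((h.const_mul (α-1)).const_add 1).mul_const r
    simpa using h2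

theorem gegenbauer_generating_function (α w t : ℝ) (hα : 0 < α) (hw : |w| < 1)
    (ht : t ∈ Set.Icc (-1 : ℝ) 1) :
    ∑' k : ℕ, gegenbauer α k t * w ^ k = 1 / (1 - 2 * t * w + w ^ 2) ^ α := by
  obtain ⟨ht1, ht2⟩ := ht
  have hQ : 0 < 1 - 2 * t * w + w ^ 2 := by
    have h1 : t * w ≤ |w| := by
      calc t * w ≤ |t * w| := le_abs_self _
        _ = |t| * |w| := abs_mul t w
        _ ≤ 1 * |w| := by
            apply mul_le_mul_of_nonneg_right _ (abs_nonneg w)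
            rw [abs_le]; constructor <;> linarith
        _ = |w| := one_mul _
    have h2 : w^2 = |w|^2 := (_root_.sq_abs w).symm
    nlinarith [abs_nonneg w]
  rcases eq_or_ne w 0 with rfl | hw0
  · rw [tsum_eq_single 0 (by intro k hk; rw [zero_pow hk, mul_zero])]
    norm_num [gegenbauer]
  -- setup z
  have hts : (1:ℝ) - t^2 ≥ 0 := by nlinarith
  set s : ℝ := Real.sqrt (1 - t^2) with hs
  have hs2 : s^2 = 1 - t^2 := Real.sq_sqrt hts
  set z : ℂ := (t:ℂ) + (s:ℂ) * Complex.I with hzdef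
  have hzre : z.re = t := by simp [hzdef]
  have hzim : z.im = s := by simp [hzdef]
  have hnsq : Complex.normSq z = 1 := by
    rw [Complex.normSq_apply, hzre, hzim]; nlinarith
  have hz : z * (starRingEnd ℂ) z = 1 := by
    rw [Complex.mul_conj, hnsq]; norm_num
  have hzsum : z + (starRingEnd ℂ) z = 2 * (t:ℂ) := by
    rw [Complex.add_conj, hzre]; push_cast; ring
  have hznorm : ‖z‖ = 1 := by
    rw [Complex.norm_def, hnsq, Real.sqrt_one]
  -- gegenbauer = AA
  have gegen_eq : ∀ n : ℕ, ((gegenbauer α n t : ℝ) : ℂ) = AA α z n := by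
    intro n
    induction n using Nat.twoStepInduction with
    | zero =>
      rw [AA_def, show ((0:ℕ):ℤ) = 0 by norm_num, Finset.Icc_self, Finset.sum_singleton, gg_def]
      rw [show (0:ℤ) - 0 = ((0:ℕ):ℤ) by norm_num, show (0:ℤ) = ((0:ℕ):ℤ) from by norm_num,
        cz_natCast, gbin_zero]
      rw [show gegenbauer α 0 t = 1 from rfl]
      norm_num
    | one =>
      have hset : Finset.Icc (0:ℤ) ((1:ℕ):ℤ) = {0, 1} := by
        ext m
        simp only [Finset.mem_Icc, Finset.mem_insert, Finset.mem_singleton]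
        omega
      rw [AA_def, hset, Finset.sum_insert (by norm_num), Finset.sum_singleton, gg_def, gg_def]
      have c0 : cz α 0 = 1 := by
        rw [show (0:ℤ) = ((0:ℕ):ℤ) by norm_num, cz_natCast, gbin_zero]
      have c1 : cz α 1 = α := by
        rw [show (1:ℤ) = ((1:ℕ):ℤ) by norm_num, cz_natCast, gbin_one]
      rw [show ((1:ℕ):ℤ) - 0 = 1 by norm_num, show ((1:ℕ):ℤ) - 1 = 0 by norm_num, c0, c1]
      rw [zpow_zero, zpow_zero, zpow_one, zpow_one]
      rw [show gegenbauer α 1 t = 2 * α * t from rfl]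
      have h2 : ((2 * α * t : ℝ):ℂ) = α * (z + (starRingEnd ℂ) z) := by
        rw [hzsum]; push_cast; ring
      rw [h2]; ring
    | more n ih ih1 =>
      have hrec := AA_rec (α := α) hz n
      have hne : ((n:ℂ)+2) ≠ 0 := by
        have h0 : ((n+2 : ℕ):ℂ) ≠ 0 := Nat.cast_ne_zero.mpr (by omega)
        push_cast at h0
        exact h0
      rw [show gegenbauer α (n+2) t =
        (2 * t * ((n : ℝ) + 2 + α - 1) * gegenbauer α (n + 1) t -
        ((n : ℝ) + 2 + 2 * α - 2) * gegenbauer α n t) / ((n : ℝ) + 2) from by rw [gegenbauer]]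
      push_cast
      rw [ih1, ih]
      rw [eq_comm, eq_div_iff (by exact_mod_cast hne)]
      rw [hzsum] at hrec
      linear_combination hrec
  -- summability and Cauchy product
  have hwpos : 0 < |w| := abs_pos.mpr hw0
  have hsum0 : Summable (fun n => gbin α n * |w| ^ n) := gbin_summable hα hwpos hw
  have hnorm1 : ∀ n : ℕ, ‖((gbin α n : ℝ):ℂ) * (z * w) ^ n‖ = gbin α n * |w| ^ n := by
    intro n
    rw [norm_mul, norm_pow, norm_mul, hznorm, Complex.norm_real, Real.norm_eq_abs,
      abs_of_pos (gbin_pos hα n), Complex.norm_real, Real.norm_eq_abs, one_mul]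
  have hnorm2 : ∀ n : ℕ, ‖((gbin α n : ℝ):ℂ) * ((starRingEnd ℂ) z * w) ^ n‖
      = gbin α n * |w| ^ n := by
    intro n
    rw [norm_mul, norm_pow, norm_mul, RCLike.norm_conj, hznorm, Complex.norm_real,
      Real.norm_eq_abs, abs_of_pos (gbin_pos hα n), Complex.norm_real, Real.norm_eq_abs, one_mul]
  have hsf : Summable (fun n => ‖((gbin α n : ℝ):ℂ) * (z * w) ^ n‖) := by
    simpa only [hnorm1] using hsum0
  have hsg : Summable (fun n => ‖((gbin α n : ℝ):ℂ) * ((starRingEnd ℂ) z * w) ^ n‖) := by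
    simpa only [hnorm2] using hsum0
  have hzw : ‖z * (w:ℂ)‖ < 1 := by
    rw [norm_mul, hznorm, one_mul, Complex.norm_real, Real.norm_eq_abs]; exact hw
  have hzbw : ‖(starRingEnd ℂ) z * (w:ℂ)‖ < 1 := by
    rw [norm_mul, RCLike.norm_conj, hznorm, one_mul, Complex.norm_real, Real.norm_eq_abs]
    exact hw
  have hcauchy := hasSum_sum_range_mul_of_summable_norm hsf hsg
  rw [(binom_hasSum α hzw).tsum_eq, (binom_hasSum α hzbw).tsum_eq] at hcauchy
  -- identify terms
  have hterm : ∀ n : ℕ, (∑ k ∈ range (n+1),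
      (((gbin α k : ℝ):ℂ) * (z * w) ^ k) * (((gbin α (n-k) : ℝ):ℂ) * ((starRingEnd ℂ) z * w) ^ (n-k)))
      = AA α z n * (w:ℂ)^n := by
    intro n
    rw [AA_eq_range, Finset.sum_mul]
    refine Finset.sum_congr rfl ?_
    intro k hk
    simp only [Finset.mem_range] at hk
    have hkn : k ≤ n := by omega
    have hpow : (w:ℂ)^k * (w:ℂ)^(n-k) = (w:ℂ)^n := by
      rw [← pow_add]; congr 1; omega
    rw [mul_pow, mul_pow]
    push_cast
    linear_combination ((gbin α k : ℝ) * (gbin α (n-k) : ℝ) * z ^ k * ((starRingEnd ℂ) z) ^ (n-k) : ℂ) * hpow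
  rw [funext hterm] at hcauchy
  -- identify value
  have hx : (1 - z * w) ^ (-(α:ℂ)) * (1 - (starRingEnd ℂ) z * w) ^ (-(α:ℂ))
      = (((1 - 2*t*w + w^2) ^ (-α) : ℝ) : ℂ) := by
    have hconj : (1 : ℂ) - (starRingEnd ℂ) z * w = (starRingEnd ℂ) (1 - z * w) := by
      rw [map_sub, map_one, map_mul, Complex.conj_ofReal]
    have hre : (0:ℝ) < (1 - z * w).re := by
      have : (z * w).re ≤ ‖z * w‖ := Complex.re_le_norm _
      have habs : ‖z * w‖ = |w| := by
        rw [norm_mul, hznorm, one_mul, Complex.norm_real,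
          Real.norm_eq_abs]
      simp only [Complex.sub_re, Complex.one_re]
      rw [habs] at this
      linarith
    have harg : (1 - z * w).arg ≠ Real.pi := by
      intro h
      rw [Complex.arg_eq_pi_iff] at h
      linarith [h.1]
    have hcp := Complex.conj_cpow (1 - z*w) (-(α:ℂ)) harg
    have hconjneg : (starRingEnd ℂ) (-(α:ℂ)) = -(α:ℂ) := by
      rw [map_neg, Complex.conj_ofReal]
    rw [hconjneg] at hcp
    rw [hconj, hcp, Complex.mul_conj]
    -- now : ↑(normSq ((1-z*w) ^ (-α))) = ↑(Q ^ (-α))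
    rw [← Complex.sq_norm]
    rw [show -(α:ℂ) = ((-α : ℝ) : ℂ) by push_cast; ring, Complex.norm_cpow_real]
    have habs2 : (‖1 - z*w‖)^2 = 1 - 2*t*w + w^2 := by
      rw [Complex.sq_norm, Complex.normSq_apply]
      simp only [Complex.sub_re, Complex.sub_im, Complex.one_re, Complex.one_im,
        Complex.mul_re, Complex.mul_im, Complex.ofReal_re, Complex.ofReal_im, hzre, hzim]
      nlinarith [hs2]
    have ha : (0:ℝ) ≤ ‖1 - z*w‖ := norm_nonneg _
    have : (‖1-z*w‖ ^ (-α)) ^ (2:ℕ) = ((‖1-z*w‖)^(2:ℕ)) ^ (-α) := by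
      rw [← Real.rpow_natCast (‖1-z*w‖ ^ (-α)) 2,
        ← Real.rpow_natCast (‖1-z*w‖) 2,
        ← Real.rpow_mul ha, ← Real.rpow_mul ha]
      norm_num [mul_comm]
    rw [this, habs2]
  rw [hx] at hcauchy
  -- transfer to ℝ
  have hreal : HasSum (fun n => gegenbauer α n t * w ^ n) ((1 - 2*t*w + w^2) ^ (-α)) := by
    rw [← Complex.hasSum_ofReal]
    convert hcauchy using 2 with n
    · rfl
    rw [← gegen_eq n]
    push_cast
    ring
  rw [hreal.tsum_eq, Real.rpow_neg hQ.le, one_div]
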